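/- For all real a with |a| ≥ 1 and all real b: |log(sinh²(a) + sin²(b)) − 2|a| + 2·log 2| ≤ 5·exp(−2|a|). -/

import Mathlib

open Real

theorem log_sinh_sq_sin_sq_uniform (a b : ℝ) (ha : 1 ≤ |a|) :
    |Real.log (Real.sinh a ^ 2 + Real.sin b ^ 2) - 2 * |a| + 2 * Real.log 2|
      ≤ 5 * Real.exp (-2 * |a|) := by
  set u := |a| with hu
  set t := Real.exp (-2 * u) with ht
  have ht0 : 0 < t := Real.exp_pos _
  have ht1 : t ≤ Real.exp (-2) := by
    rw [ht]
    apply Real.exp_le_exp.2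
    nlinarith
  have htlt : t < 1/2 := lt_of_le_of_lt ht1 (by
    have : Real.exp (-2) < 1/2 := by
      rw [Real.exp_neg]
      rw [inv_lt_comm₀ (Real.exp_pos _) (by norm_num)]
      calc (1/2 : ℝ)⁻¹ = 2 := by norm_num
      _ < Real.exp 2 := by nlinarith [Real.add_one_le_exp (2:ℝ)]
    exact this)
  have hsinh : Real.sinh a ^ 2 = Real.sinh u ^ 2 := by
    rcases abs_choice a with h | h
    · rw [hu, h]
    · rw [hu, h, Real.sinh_neg]; ring
  set s := Real.sin b ^ 2 with hs
  have hs0 : 0 ≤ s := sq_nonneg _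
  have hs1 : s ≤ 1 := by
    have := Real.sin_sq_le_one b
    simpa [hs] using this
  have hexp : Real.exp (2 * u) * t = 1 := by
    rw [ht, ← Real.exp_add]; norm_num
  have hkey : Real.sinh a ^ 2 + s
      = Real.exp (2 * u) / 4 * ((1 - t)^2 + 4 * t * s) := by
    rw [hsinh, Real.sinh_eq]
    have h1 : Real.exp (-u) = Real.exp u * t := by
      rw [ht, ← Real.exp_add]; ring_nf
    have h2 : Real.exp (2 * u) = Real.exp u * Real.exp u := by
      rw [← Real.exp_add]; ring_nf
    rw [h1, h2]
    have h3 : Real.exp u * Real.exp u * t = 1 := by rw [← h2]; exact hexp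
    nlinarith [h3]
  set X := (1 - t)^2 + 4 * t * s with hX
  have hXlo : (1 - t)^2 ≤ X := by nlinarith
  have hXhi : X ≤ (1 + t)^2 := by nlinarith
  have hXpos : 0 < X := lt_of_lt_of_le (by nlinarith) hXlo
  have hlog : Real.log (Real.sinh a ^ 2 + s)
      = 2 * u - 2 * Real.log 2 + Real.log X := by
    rw [hkey, Real.log_mul (by positivity) (ne_of_gt hXpos),
        Real.log_div (ne_of_gt (Real.exp_pos _)) (by norm_num),
        Real.log_exp]
    have h4 : Real.log 4 = 2 * Real.log 2 := by
      rw [show (4:ℝ) = 2^2 by norm_num, Real.log_pow]; norm_num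
    rw [h4]
  rw [hlog]
  rw [show 2 * u - 2 * Real.log 2 + Real.log X - 2 * u + 2 * Real.log 2
      = Real.log X by ring]
  rw [abs_le]
  constructor
  · -- lower bound: log X ≥ -5t
    have h1t : (0:ℝ) < 1 - t := by linarith
    have hlow : Real.log ((1 - t)^2) ≤ Real.log X :=
      Real.log_le_log (by positivity) hXlo
    have h2 : Real.log ((1 - t)^2) = 2 * Real.log (1 - t) := by
      rw [show ((1:ℝ) - t)^2 = (1-t)^2 from rfl, Real.log_pow]; norm_num
    have h3 : Real.log (1/(1-t)) ≤ 1/(1-t) - 1 :=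
      Real.log_le_sub_one_of_pos (by positivity)
    have h4 : Real.log (1/(1-t)) = - Real.log (1-t) := by
      rw [one_div, Real.log_inv]
    have h5 : -Real.log (1-t) ≤ t/(1-t) := by
      rw [← h4]
      calc Real.log (1/(1-t)) ≤ 1/(1-t) - 1 := h3
      _ = t/(1-t) := by field_simp; ring
    have h6 : t/(1-t) ≤ 5*t/2 := by
      rw [div_le_div_iff₀ h1t (by norm_num)]
      nlinarith
    have : -(5*t/2) ≤ Real.log (1-t) := by linarith
    calc -(5 * t) = 2 * (-(5*t/2)) := by ring
    _ ≤ 2 * Real.log (1-t) := by linarith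
    _ = Real.log ((1-t)^2) := h2.symm
    _ ≤ Real.log X := hlow
  · -- upper bound
    have := Real.log_le_sub_one_of_pos hXpos
    nlinarith
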